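/- arXiv:cs/0606015 — 4 statements merged into one kernel-verified Lean document; each statement's English description precedes it below -/
import Mathlib

section
/- Let A be an N×N real symmetric matrix with eigenvalues λ₁ ≥ ⋯ ≥ λ_N, and let λ̂₁ ≥ ⋯ ≥ λ̂_N be real numbers satisfying λ̂₁ ≥ λ₁ ≥ λ̂₂ ≥ λ₂ ≥ ⋯ ≥ λ̂_N ≥ λ_N. Then there exists a real vector c ∈ ℝ^N such that the eigenvalues of A + ccᵀ are exactly λ̂₁, …, λ̂_N. -/
open Polynomial

section AuxConverseWeyl
open Matrix Finset

lemma exists_perm_comp {N : ℕ} (f g : Fin N → ℝ)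
    (h : Multiset.map f Finset.univ.val = Multiset.map g Finset.univ.val) :
    ∃ σ : Equiv.Perm (Fin N), f = g ∘ σ := by
  have hperm : List.Perm (List.ofFn f) (List.ofFn g) := by
    apply Multiset.coe_eq_coe.mp
    simpa [Fin.univ_val_map] using h
  have h1 : f ∘ Tuple.sort f = g ∘ Tuple.sort g :=
    List.ofFn_injective <|
      List.Perm.eq_of_sortedLE
        (Tuple.monotone_sort f).sortedLE_ofFn (Tuple.monotone_sort g).sortedLE_ofFn
        (((Tuple.sort f).ofFn_comp_perm f).trans
          (hperm.trans ((Tuple.sort g).ofFn_comp_perm g).symm))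
  refine ⟨(Tuple.sort f).symm.trans (Tuple.sort g), ?_⟩
  funext i
  have := congrFun h1 ((Tuple.sort f).symm i)
  simpa using this

lemma charpoly_diag {N : ℕ} (d : Fin N → ℝ) :
    (Matrix.diagonal d).charpoly = ∏ i : Fin N, (X - C (d i)) := by
  have : charmatrix (Matrix.diagonal d) = Matrix.diagonal fun i => X - C (d i) := by
    ext i j
    by_cases h : i = j
    · subst h; simp [charmatrix_apply_eq]
    · simp [charmatrix_apply_ne _ _ _ h, Matrix.diagonal_apply_ne _ h]
  rw [Matrix.charpoly, this, Matrix.det_diagonal]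

lemma charpoly_conj {n : Type*} [Fintype n] [DecidableEq n] {U V B : Matrix n n ℝ}
    (hUV : U * V = 1) (hVU : V * U = 1) : (U * B * V).charpoly = B.charpoly := by
  have h1 : (U.map C) * (V.map C) = 1 := by
    rw [← Matrix.map_mul, hUV]; simp [Matrix.map_one]
  have h2 : (V.map C) * (U.map C) = 1 := by
    rw [← Matrix.map_mul, hVU]; simp [Matrix.map_one]
  have key : charmatrix (U * B * V) = U.map C * charmatrix B * V.map C := by
    unfold charmatrix
    simp only [RingHom.mapMatrix_apply]
    rw [Matrix.map_mul, Matrix.map_mul, mul_sub, sub_mul]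
    congr 1
    rw [mul_assoc, (Matrix.scalar_commute X (fun r => Commute.all _ _) (V.map C)), ← mul_assoc, h1, one_mul]
  rw [Matrix.charpoly, key, Matrix.det_mul, Matrix.det_mul, Matrix.charpoly]
  have : (U.map C).det * (V.map C).det = 1 := by
    rw [← Matrix.det_mul, h1, Matrix.det_one]
  calc (U.map C).det * (charmatrix B).det * (V.map C).det
      = ((U.map C).det * (V.map C).det) * (charmatrix B).det := by ring
    _ = (charmatrix B).det := by rw [this, one_mul]

lemma det_diag_sub_vecMulVec {N : ℕ} {K : Type*} [Field K] (g u : Fin N → K)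
    (hg0 : ∀ i, g i ≠ 0) :
    (Matrix.diagonal g - Matrix.vecMulVec u u).det
      = ∏ i, g i - ∑ i, u i ^ 2 * ∏ j ∈ Finset.univ.erase i, g j := by
  classical
  set w : Fin N → K := fun i => -(u i) / g i with hw
  have h1 : Matrix.diagonal g * Matrix.replicateCol Unit w = -(Matrix.replicateCol Unit u) := by
    ext i j
    simp only [Matrix.diagonal_mul, Matrix.replicateCol_apply, Matrix.neg_apply, hw]
    rw [mul_comm, div_mul_cancel₀ _ (hg0 i)]
  have key : Matrix.diagonal g - Matrix.vecMulVec u u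
      = Matrix.diagonal g * (1 + Matrix.replicateCol Unit w * Matrix.replicateRow Unit u) := by
    rw [mul_add, mul_one, ← Matrix.mul_assoc, h1, Matrix.vecMulVec_eq Unit,
      Matrix.neg_mul, ← sub_eq_add_neg]
  rw [key, Matrix.det_mul, Matrix.det_one_add_replicateCol_mul_replicateRow, Matrix.det_diagonal]
  have h2 : u ⬝ᵥ w = -∑ i, u i ^ 2 / g i := by
    simp only [dotProduct, hw, ← Finset.sum_neg_distrib]
    congr 1; funext i; ring
  have h3 : ∀ i : Fin N, (∏ j, g j) * (u i ^ 2 / g i)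
      = u i ^ 2 * ∏ j ∈ Finset.univ.erase i, g j := by
    intro i
    rw [← Finset.prod_erase_mul _ _ (Finset.mem_univ i), mul_assoc, mul_div_assoc',
      mul_div_cancel_left₀ _ (hg0 i), mul_comm]
  rw [h2, mul_add, mul_one, mul_neg, Finset.mul_sum,
    Finset.sum_congr rfl (fun i _ => h3 i), ← sub_eq_add_neg]

lemma charpoly_diag_add_vecMulVec {N : ℕ} (d c : Fin N → ℝ) :
    (Matrix.diagonal d + Matrix.vecMulVec c c).charpoly
      = ∏ i : Fin N, (X - C (d i))
        - ∑ i : Fin N, C (c i ^ 2) * ∏ j ∈ Finset.univ.erase i, (X - C (d j)) := by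
  classical
  set K := RatFunc ℝ
  set f : ℝ[X] →+* K := (algebraMap ℝ[X] K : ℝ[X] →+* K) with hf
  have hinj : Function.Injective f := IsFractionRing.injective ℝ[X] K
  apply hinj
  set g : Fin N → K := fun i => f (X - C (d i)) with hg
  set u : Fin N → K := fun i => f (C (c i)) with hu
  have hg0 : ∀ i, g i ≠ 0 := fun i => by
    simp only [hg]
    rw [map_ne_zero_iff f hinj]
    exact X_sub_C_ne_zero _
  have hchar : (charmatrix (Matrix.diagonal d + Matrix.vecMulVec c c)).map f
      = Matrix.diagonal g - Matrix.vecMulVec u u := by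
    ext i j
    by_cases h : i = j
    · subst h
      simp only [Matrix.map_apply, charmatrix_apply_eq, Matrix.add_apply,
        Matrix.diagonal_apply_eq, Matrix.vecMulVec_apply, Matrix.sub_apply,
        map_sub, map_add, C_add, C_mul, _root_.map_mul, hg, hu]
      ring
    · simp only [Matrix.map_apply, charmatrix_apply_ne _ _ _ h, Matrix.add_apply,
        Matrix.diagonal_apply_ne _ h, Matrix.vecMulVec_apply, Matrix.sub_apply,
        map_neg, map_sub, map_add, C_add, C_mul, _root_.map_mul, zero_add, hg, hu]
      ring
  rw [Matrix.charpoly, RingHom.map_det, RingHom.mapMatrix_apply, hchar, det_diag_sub_vecMulVec g u hg0]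
  rw [map_sub, map_prod, map_sum]
  congr 1
  refine Finset.sum_congr rfl fun i _ => ?_
  rw [_root_.map_mul, map_prod]
  congr 1
  rw [show (C (c i ^ 2) : ℝ[X]) = C (c i) ^ 2 from map_pow Polynomial.C _ _, map_pow]

lemma sign_prod_nonneg {α : Type*} [DecidableEq α] (s : Finset α) (f : α → ℝ) (P : α → Prop)
    [DecidablePred P] (h1 : ∀ a ∈ s, P a → f a ≤ 0) (h2 : ∀ a ∈ s, ¬P a → 0 ≤ f a) :
    0 ≤ (-1 : ℝ) ^ (s.filter P).card * ∏ a ∈ s, f a := by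
  rw [← Finset.prod_filter_mul_prod_filter_not s P f, ← mul_assoc]
  have key : (-1 : ℝ) ^ (s.filter P).card * ∏ a ∈ s.filter P, f a
      = ∏ a ∈ s.filter P, (-f a) := by
    rw [show (fun a => -f a) = fun a => (-1 : ℝ) * f a from funext fun a => by ring,
      Finset.prod_mul_distrib, Finset.prod_const]
  rw [key]
  apply mul_nonneg
  · exact Finset.prod_nonneg fun a ha => by
      have := Finset.mem_filter.mp ha; exact neg_nonneg.mpr (h1 a this.1 this.2)
  · exact Finset.prod_nonneg fun a ha => by
      have := Finset.mem_filter.mp ha; exact h2 a this.1 this.2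

lemma sign_prod_pos {α : Type*} [DecidableEq α] (s : Finset α) (f : α → ℝ) (P : α → Prop)
    [DecidablePred P] (h1 : ∀ a ∈ s, P a → f a < 0) (h2 : ∀ a ∈ s, ¬P a → 0 < f a) :
    0 < (-1 : ℝ) ^ (s.filter P).card * ∏ a ∈ s, f a := by
  rw [← Finset.prod_filter_mul_prod_filter_not s P f, ← mul_assoc]
  have key : (-1 : ℝ) ^ (s.filter P).card * ∏ a ∈ s.filter P, f a
      = ∏ a ∈ s.filter P, (-f a) := by
    rw [show (fun a => -f a) = fun a => (-1 : ℝ) * f a from funext fun a => by ring,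
      Finset.prod_mul_distrib, Finset.prod_const]
  rw [key]
  apply mul_pos
  · exact Finset.prod_pos fun a ha => by
      have := Finset.mem_filter.mp ha; exact neg_pos.mpr (h1 a this.1 this.2)
  · exact Finset.prod_pos fun a ha => by
      have := Finset.mem_filter.mp ha; exact h2 a this.1 this.2

lemma key_poly_inj {n : ℕ} (lam lhat : Fin n → ℝ) (hlam : Antitone lam) (hlhat : Antitone lhat)
    (h₁ : ∀ i, lam i ≤ lhat i) (h₂ : ∀ i j : Fin n, (i : ℕ) + 1 = (j : ℕ) → lhat j ≤ lam i)
    (hinj : Function.Injective lam) :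
    ∃ t : Fin n → ℝ, (∀ i, 0 ≤ t i) ∧
      ∏ i, (X - C (lhat i)) = ∏ i, (X - C (lam i))
        - ∑ i, C (t i) * ∏ j ∈ Finset.univ.erase i, (X - C (lam j)) := by
  classical
  have hstrict : StrictAnti lam := hlam.strictAnti_of_injective hinj
  set Num : Fin n → ℝ := fun i => ∏ j, (lam i - lhat j) with hNumdef
  set Den : Fin n → ℝ := fun i => ∏ j ∈ Finset.univ.erase i, (lam i - lam j) with hDendef
  have hDen0 : ∀ i, Den i ≠ 0 := by
    intro i
    rw [hDendef]
    rw [Finset.prod_ne_zero_iff]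
    intro j hj
    have : j ≠ i := (Finset.mem_erase.mp hj).1
    exact sub_ne_zero.mpr fun h => this (hinj h.symm)
  have hNum : ∀ i : Fin n, 0 ≤ (-1 : ℝ) ^ ((i : ℕ) + 1) * Num i := by
    intro i
    have hcard : (Finset.univ.filter (fun j => j ≤ i) : Finset (Fin n)).card = (i : ℕ) + 1 := by
      rw [show Finset.univ.filter (fun j => j ≤ i) = Finset.Iic i by ext x; simp, Fin.card_Iic]
    rw [← hcard]
    apply sign_prod_nonneg
    · intro j _ hji
      exact sub_nonpos.mpr ((h₁ i).trans (hlhat hji))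
    · intro j _ hji
      push_neg at hji
      have hij : (i : ℕ) + 1 ≤ (j : ℕ) := hji
      have hlt : (i : ℕ) + 1 < n := lt_of_le_of_lt hij j.isLt
      refine sub_nonneg.mpr ((hlhat (show (⟨(i:ℕ)+1, hlt⟩ : Fin n) ≤ j from hij)).trans
        (h₂ i ⟨(i:ℕ)+1, hlt⟩ rfl))
  have hDen : ∀ i : Fin n, 0 < (-1 : ℝ) ^ ((i : ℕ)) * Den i := by
    intro i
    have hcard : ((Finset.univ.erase i).filter (fun j => j < i)).card = (i : ℕ) := by
      rw [show (Finset.univ.erase i).filter (fun j => j < i) = Finset.Iio i by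
        ext x
        simp only [Finset.mem_filter, Finset.mem_erase, Finset.mem_univ, true_and, and_true,
          Finset.mem_Iio]
        exact ⟨fun h => h.2, fun h => ⟨ne_of_lt h, h⟩⟩, Fin.card_Iio]
    rw [← hcard]
    apply sign_prod_pos
    · intro j hj hji
      exact sub_neg.mpr (hstrict hji)
    · intro j hj hji
      push_neg at hji
      have : i < j := lt_of_le_of_ne hji (Ne.symm (Finset.mem_erase.mp hj).1)
      exact sub_pos.mpr (hstrict this)
  set t : Fin n → ℝ := fun i => -(Num i) / Den i with htdef
  have ht0 : ∀ i, 0 ≤ t i := by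
    intro i
    have hrw : t i = ((-1 : ℝ) ^ ((i : ℕ) + 1) * Num i) / ((-1 : ℝ) ^ ((i : ℕ)) * Den i) := by
      rw [htdef]
      rw [div_eq_div_iff (hDen0 i) (ne_of_gt (hDen i))]
      rw [pow_succ]
      ring
    rw [hrw]
    exact div_nonneg (hNum i) (le_of_lt (hDen i))
  refine ⟨t, ht0, ?_⟩
  have hmonic1 : (∏ i, (X - C (lam i)) : ℝ[X]).Monic :=
    monic_prod_of_monic _ _ fun i _ => monic_X_sub_C _
  have hmonic2 : (∏ i, (X - C (lhat i)) : ℝ[X]).Monic :=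
    monic_prod_of_monic _ _ fun i _ => monic_X_sub_C _
  have hdeg_p : (∏ i, (X - C (lam i)) : ℝ[X]).degree = (n : WithBot ℕ) := by
    rw [degree_prod]
    simp [degree_X_sub_C]
  have hdeg_q : (∏ i, (X - C (lhat i)) : ℝ[X]).degree = (n : WithBot ℕ) := by
    rw [degree_prod]
    simp [degree_X_sub_C]
  have hcardu : ((Finset.univ : Finset (Fin n)).card : WithBot ℕ) = (n : WithBot ℕ) := by
    rw [Finset.card_univ, Fintype.card_fin]
  have hdeg1 : (∏ i, (X - C (lam i)) - ∏ i, (X - C (lhat i)) : ℝ[X]).degree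
      < ((Finset.univ : Finset (Fin n)).card : WithBot ℕ) := by
    rw [hcardu, ← hdeg_p]
    exact degree_sub_lt (hdeg_p.trans hdeg_q.symm) hmonic1.ne_zero
      (by rw [hmonic1.leadingCoeff, hmonic2.leadingCoeff])
  have hdeg2 : (∑ i, C (t i) * ∏ j ∈ Finset.univ.erase i, (X - C (lam j)) : ℝ[X]).degree
      < ((Finset.univ : Finset (Fin n)).card : WithBot ℕ) := by
    apply lt_of_le_of_lt (degree_sum_le _ _)
    rw [Finset.sup_lt_iff (by rw [hcardu]; exact WithBot.bot_lt_coe n)]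
    intro i _
    have hn : 0 < n := i.pos
    apply lt_of_le_of_lt (degree_mul_le _ _)
    have hd2 : (∏ j ∈ Finset.univ.erase i, (X - C (lam j)) : ℝ[X]).degree
        = ((n - 1 : ℕ) : WithBot ℕ) := by
      rw [degree_prod]
      simp only [degree_X_sub_C]
      rw [Finset.sum_const, Finset.card_erase_of_mem (Finset.mem_univ i), Finset.card_univ,
        Fintype.card_fin]
      simp
    rw [hd2, hcardu]
    calc degree (C (t i)) + ((n - 1 : ℕ) : WithBot ℕ)
        ≤ 0 + ((n - 1 : ℕ) : WithBot ℕ) := add_le_add_left degree_C_le _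
      _ = ((n - 1 : ℕ) : WithBot ℕ) := zero_add _
      _ < (n : WithBot ℕ) := by
          rw [Nat.cast_lt]
          omega
  have hId : (∏ i, (X - C (lam i)) - ∏ i, (X - C (lhat i)) : ℝ[X])
      = ∑ i, C (t i) * ∏ j ∈ Finset.univ.erase i, (X - C (lam j)) := by
    apply Polynomial.eq_of_degrees_lt_of_eval_index_eq (v := lam) Finset.univ
      (Function.Injective.injOn hinj) hdeg1 hdeg2
    intro k _
    rw [eval_sub, eval_prod, eval_prod, eval_finset_sum]
    have hzero : (∏ j, eval (lam k) (X - C (lam j))) = 0 :=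
      Finset.prod_eq_zero (Finset.mem_univ k) (by simp)
    rw [hzero]
    rw [Finset.sum_eq_single k]
    · simp only [eval_mul, eval_C, eval_prod, eval_sub, eval_X]
      have : t k * Den k = -(Num k) := by
        rw [htdef]
        exact div_mul_cancel₀ _ (hDen0 k)
      rw [show (∏ j ∈ Finset.univ.erase k, (lam k - lam j)) = Den k from rfl, this]
      simp [hNumdef]
    · intro i _ hik
      simp only [eval_mul, eval_C, eval_prod, eval_sub, eval_X]
      have : (∏ j ∈ Finset.univ.erase i, (lam k - lam j)) = 0 :=
        Finset.prod_eq_zero (Finset.mem_erase.mpr ⟨hik.symm, Finset.mem_univ k⟩) (sub_self _)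
      rw [this, mul_zero]
    · intro h
      exact absurd (Finset.mem_univ k) h
  linear_combination -hId

lemma key_poly : ∀ (n : ℕ) (lam lhat : Fin n → ℝ), Antitone lam → Antitone lhat →
    (∀ i, lam i ≤ lhat i) → (∀ i j : Fin n, (i : ℕ) + 1 = (j : ℕ) → lhat j ≤ lam i) →
    ∃ t : Fin n → ℝ, (∀ i, 0 ≤ t i) ∧
      ∏ i, (X - C (lhat i)) = ∏ i, (X - C (lam i))
        - ∑ i, C (t i) * ∏ j ∈ Finset.univ.erase i, (X - C (lam j)) := by
  intro n
  induction n with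
  | zero =>
    intro lam lhat _ _ _ _
    exact ⟨fun _ => 0, fun i => le_refl _, by simp⟩
  | succ n ih =>
    intro lam lhat hlam hlhat h₁ h₂
    by_cases hinj : Function.Injective lam
    · exact key_poly_inj lam lhat hlam hlhat h₁ h₂ hinj
    · -- find adjacent equal pair, hence an index where lhat = lam
      rw [Function.not_injective_iff] at hinj
      obtain ⟨a₀, b₀, hval₀, hne₀⟩ := hinj
      have hex : ∃ a b : Fin (n + 1), (a : ℕ) < (b : ℕ) ∧ lam a = lam b := by
        rcases hne₀.lt_or_gt with h | h
        · exact ⟨a₀, b₀, h, hval₀⟩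
        · exact ⟨b₀, a₀, h, hval₀.symm⟩
      obtain ⟨a, b, hab, hval⟩ := hex
      have hk : (a : ℕ) + 1 < n + 1 := lt_of_le_of_lt hab b.isLt
      set k₁ : Fin (n + 1) := ⟨(a : ℕ) + 1, hk⟩ with hk₁def
      have hhk : lhat k₁ = lam k₁ := by
        have hle1 : lhat k₁ ≤ lam a := h₂ a k₁ rfl
        have hle2 : lam b ≤ lam k₁ := hlam (show k₁ ≤ b from hab)
        have hle3 : lam k₁ ≤ lam a := hlam (show a ≤ k₁ from by
          rw [Fin.le_def]; simp [hk₁def])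
        have : lam k₁ = lam a := le_antisymm hle3 (hval ▸ hle2)
        exact le_antisymm (this ▸ hle1) (h₁ k₁)
      set s : Fin n → Fin (n + 1) := k₁.succAbove with hsdef
      have hs : StrictMono s := Fin.strictMono_succAbove k₁
      have h₂' : ∀ i j : Fin n, (i : ℕ) + 1 = (j : ℕ) → lhat (s j) ≤ lam (s i) := by
        intro i j hij
        have hlt : i < j := by rw [Fin.lt_def]; omega
        have h1 : (s i : ℕ) + 1 ≤ (s j : ℕ) := hs hlt
        have h2 : (s i : ℕ) + 1 < n + 1 := lt_of_le_of_lt h1 (s j).isLt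
        calc lhat (s j) ≤ lhat ⟨(s i : ℕ) + 1, h2⟩ := hlhat (by rw [Fin.le_def]; exact h1)
          _ ≤ lam (s i) := h₂ (s i) ⟨(s i : ℕ) + 1, h2⟩ rfl
      obtain ⟨t', ht'0, ht'⟩ := ih (lam ∘ s) (lhat ∘ s)
        (hlam.comp_monotone hs.monotone) (hlhat.comp_monotone hs.monotone)
        (fun i => h₁ (s i)) h₂'
      have hnotk : ¬∃ j, s j = k₁ := fun ⟨j, hj⟩ => Fin.succAbove_ne k₁ j hj
      refine ⟨Function.extend s t' 0, ?_, ?_⟩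
      · intro i
        by_cases hi : i = k₁
        · subst hi
          rw [Function.extend_apply' _ _ _ hnotk]
          exact le_refl _
        · obtain ⟨j, rfl⟩ := Fin.exists_succAbove_eq hi
          rw [hs.injective.extend_apply]
          exact ht'0 j
      · have e0 : Function.extend s t' 0 k₁ = 0 := Function.extend_apply' _ _ _ hnotk
        have herase : ∀ j : Fin n, (∏ m ∈ Finset.univ.erase (s j), (X - C (lam m)) : ℝ[X])
            = (X - C (lam k₁)) * ∏ m ∈ Finset.univ.erase j, (X - C (lam (s m))) := by
          intro j
          have hk1mem : k₁ ∈ Finset.univ.erase (s j) :=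
            Finset.mem_erase.mpr ⟨(Fin.succAbove_ne k₁ j).symm, Finset.mem_univ _⟩
          rw [← Finset.mul_prod_erase _ _ hk1mem]
          congr 1
          rw [show (Finset.univ.erase (s j)).erase k₁ = (Finset.univ.erase j).image s from ?_,
            Finset.prod_image (fun a _ b _ h => hs.injective h)]
          ext x
          simp only [Finset.mem_erase, Finset.mem_image, Finset.mem_univ, and_true]
          constructor
          · rintro ⟨hx1, hx2⟩
            obtain ⟨m, rfl⟩ := Fin.exists_succAbove_eq hx1
            exact ⟨m, fun hmj => hx2 (by rw [hmj]), rfl⟩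
          · rintro ⟨m, hmj, rfl⟩
            exact ⟨Fin.succAbove_ne k₁ m, fun h => hmj (hs.injective h)⟩
        rw [Fin.prod_univ_succAbove (fun i => (X - C (lhat i) : ℝ[X])) k₁,
          Fin.prod_univ_succAbove (fun i => (X - C (lam i) : ℝ[X])) k₁,
          Fin.sum_univ_succAbove (fun i => (C (Function.extend s t' 0 i)
            * ∏ j ∈ Finset.univ.erase i, (X - C (lam j)) : ℝ[X])) k₁,
          e0, hhk]
        simp only [map_zero, zero_mul, zero_add]
        have hterm : ∀ j : Fin n, (C (Function.extend s t' 0 (s j))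
            * ∏ m ∈ Finset.univ.erase (s j), (X - C (lam m)) : ℝ[X])
            = C (t' j) * ((X - C (lam k₁)) * ∏ m ∈ Finset.univ.erase j, (X - C (lam (s m)))) := by
          intro j
          rw [hs.injective.extend_apply, herase j]
        rw [Finset.sum_congr rfl fun j _ => hterm j]
        have := ht'
        simp only [Function.comp] at this
        rw [this, mul_sub, Finset.mul_sum]
        congr 1
        exact Finset.sum_congr rfl fun j _ => by ring

end AuxConverseWeyl

open Matrix Finset in
/-- Real version of the converse to Weyl's interlacing theorem: a real symmetric
matrix admits a real rank-one perturbation realizing any interlacing spectrum. -/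
theorem converse_weyl_real (N : ℕ) (A : Matrix (Fin N) (Fin N) ℝ)
    (hA : A.IsSymm) (lam lhat : Fin N → ℝ)
    (hcp : A.charpoly = ∏ i : Fin N, (X - C (lam i)))
    (hlam : Antitone lam) (hlhat : Antitone lhat)
    (h₁ : ∀ i : Fin N, lam i ≤ lhat i)
    (h₂ : ∀ i j : Fin N, (i : ℕ) + 1 = (j : ℕ) → lhat j ≤ lam i) :
    ∃ c : Fin N → ℝ,
      (A + Matrix.vecMulVec c c).charpoly
        = ∏ i : Fin N, (X - C (lhat i)) := by
  classical
  have hH : A.IsHermitian := by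
    have ht : Aᴴ = Aᵀ := by ext i j; simp [Matrix.conjTranspose_apply]
    rw [Matrix.IsHermitian, ht]; exact hA
  set U : Matrix (Fin N) (Fin N) ℝ := (hH.eigenvectorUnitary : Matrix (Fin N) (Fin N) ℝ) with hU
  have hUV : U * star U = 1 := Matrix.mem_unitaryGroup_iff.mp hH.eigenvectorUnitary.2
  have hVU : star U * U = 1 := Matrix.mem_unitaryGroup_iff'.mp hH.eigenvectorUnitary.2
  set ev : Fin N → ℝ := hH.eigenvalues with hev
  have hspec : A = U * Matrix.diagonal ev * star U := by
    have h := hH.spectral_theorem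
    rwa [RCLike.ofReal_real_eq_id, Function.id_comp] at h
  have hevcp : ∏ i, (X - C (ev i)) = ∏ i, (X - C (lam i)) := by
    rw [← charpoly_diag ev, ← hcp]
    conv_rhs => rw [hspec]
    rw [charpoly_conj hUV hVU]
  have hmult : Multiset.map ev Finset.univ.val = Multiset.map lam Finset.univ.val := by
    have h1 := Polynomial.roots_multiset_prod_X_sub_C (Multiset.map ev Finset.univ.val)
    have h2 := Polynomial.roots_multiset_prod_X_sub_C (Multiset.map lam Finset.univ.val)
    rw [← h1, ← h2]
    congr 1
    rw [Multiset.map_map, Multiset.map_map]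
    exact hevcp
  obtain ⟨σ, hσ⟩ := exists_perm_comp ev lam hmult
  obtain ⟨t, ht0, ht⟩ := key_poly N lam lhat hlam hlhat h₁ h₂
  set c₀ : Fin N → ℝ := fun i => Real.sqrt (t i) with hc₀def
  have hc₀ : ∀ i, c₀ i ^ 2 = t i := fun i => Real.sq_sqrt (ht0 i)
  have hdiagcp : (Matrix.diagonal lam + Matrix.vecMulVec c₀ c₀).charpoly
      = ∏ i, (X - C (lhat i)) := by
    rw [charpoly_diag_add_vecMulVec, ht]
    congr 1
    exact Finset.sum_congr rfl fun i _ => by rw [hc₀ i]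
  set c₁ : Fin N → ℝ := c₀ ∘ σ with hc₁def
  have hsub : Matrix.diagonal ev + Matrix.vecMulVec c₁ c₁
      = (Matrix.diagonal lam + Matrix.vecMulVec c₀ c₀).submatrix σ σ := by
    ext i j
    by_cases h : i = j
    · subst h
      simp [Matrix.diagonal_apply_eq, hσ, hc₁def, Matrix.vecMulVec_apply, Function.comp]
    · simp [Matrix.submatrix_apply, Matrix.add_apply, Matrix.diagonal_apply_ne _ h,
        Matrix.diagonal_apply_ne _ (fun hh => h (σ.injective hh)), Matrix.vecMulVec_apply,
        hc₁def]
  have hcp₁ : (Matrix.diagonal ev + Matrix.vecMulVec c₁ c₁).charpoly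
      = ∏ i, (X - C (lhat i)) := by
    rw [hsub, show (Matrix.diagonal lam + Matrix.vecMulVec c₀ c₀).submatrix ⇑σ ⇑σ
        = Matrix.reindex σ.symm σ.symm (Matrix.diagonal lam + Matrix.vecMulVec c₀ c₀) from by
        rw [Matrix.reindex_apply]; simp,
      Matrix.charpoly_reindex, hdiagcp]
  refine ⟨U *ᵥ c₁, ?_⟩
  have hstarT : star U = Uᵀ := by
    rw [Matrix.star_eq_conjTranspose]
    ext i j; simp [Matrix.conjTranspose_apply]
  have hvmv : Matrix.vecMulVec (U *ᵥ c₁) (U *ᵥ c₁) = U * Matrix.vecMulVec c₁ c₁ * star U := by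
    rw [Matrix.vecMulVec_eq Unit, Matrix.vecMulVec_eq Unit (w := c₁), hstarT,
      Matrix.replicateCol_mulVec, ← Matrix.vecMul_transpose, Matrix.replicateRow_vecMul]
    simp [Matrix.mul_assoc]
  have hfinal : A + Matrix.vecMulVec (U *ᵥ c₁) (U *ᵥ c₁)
      = U * (Matrix.diagonal ev + Matrix.vecMulVec c₁ c₁) * star U := by
    rw [hvmv, hspec]
    rw [Matrix.mul_add, Matrix.add_mul]
  rw [hfinal, charpoly_conj hUV hVU, hcp₁]
end

section
/- Let λ₁ > ⋯ > λ_N be distinct reals interlaced by λ̂₁ ≥ λ₁ ≥ λ̂₂ ≥ ⋯ ≥ λ̂_N ≥ λ_N, and define yᵢ = √( ∏ⱼ |λᵢ − λ̂ⱼ| / ∏_{j≠i} |λᵢ − λⱼ| ). Then the eigenvalues of diag(λ) + yyᵀ are exactly λ̂₁, …, λ̂_N. -/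
open Polynomial Finset

private lemma prod_sign_split' {ι : Type*} (s : Finset ι) (f : ι → ℝ) (P : ι → Prop)
    [DecidablePred P]
    (h1 : ∀ j ∈ s, P j → f j ≤ 0) (h2 : ∀ j ∈ s, ¬ P j → 0 ≤ f j) :
    ∏ j ∈ s, f j = (-1) ^ (s.filter P).card * ∏ j ∈ s, |f j| := by
  rw [← Finset.prod_filter_mul_prod_filter_not s P f,
      ← Finset.prod_filter_mul_prod_filter_not s P (fun j => |f j|)]
  have e1 : ∏ j ∈ s.filter P, f j = (-1) ^ (s.filter P).card * ∏ j ∈ s.filter P, |f j| := by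
    rw [← Finset.prod_const, ← Finset.prod_mul_distrib]
    refine Finset.prod_congr rfl fun j hj => ?_
    rw [mem_filter] at hj
    rw [abs_of_nonpos (h1 j hj.1 hj.2)]; ring
  have e2 : ∏ j ∈ s.filter (fun j => ¬ P j), f j
      = ∏ j ∈ s.filter (fun j => ¬ P j), |f j| := by
    refine Finset.prod_congr rfl fun j hj => ?_
    rw [mem_filter] at hj
    rw [abs_of_nonneg (h2 j hj.1 hj.2)]
  rw [e1, e2]; ring

private lemma ysq_eq' (N : ℕ) (lam lhat : Fin N → ℝ)
    (hlam : StrictAnti lam)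
    (h₁ : ∀ i : Fin N, lam i ≤ lhat i)
    (h₂ : ∀ i j : Fin N, (i : ℕ) + 1 = (j : ℕ) → lhat j ≤ lam i)
    (y : Fin N → ℝ)
    (hy : ∀ i, y i = Real.sqrt ((∏ j, |lam i - lhat j|)
        / (∏ j ∈ Finset.univ.erase i, |lam i - lam j|)))
    (i : Fin N) :
    y i ^ 2 = -((∏ j, (lam i - lhat j)) / (∏ j ∈ Finset.univ.erase i, (lam i - lam j))) := by
  set A := ∏ j, |lam i - lhat j| with hA
  set B := ∏ j ∈ Finset.univ.erase i, |lam i - lam j| with hB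
  have hBpos : 0 < B := by
    refine Finset.prod_pos fun j hj => ?_
    rw [mem_erase] at hj
    exact abs_pos.2 (sub_ne_zero.2 fun h => hj.1 (hlam.injective h.symm))
  have hApos : 0 ≤ A := Finset.prod_nonneg fun j _ => abs_nonneg _
  have hysq : y i ^ 2 = A / B := by
    rw [hy i, Real.sq_sqrt (div_nonneg hApos hBpos.le)]
  have hc : (∏ j, (lam i - lhat j)) = (-1) ^ ((i : ℕ) + 1) * A := by
    rw [prod_sign_split' Finset.univ _ (fun j => j ≤ i)]
    · congr 2
      rw [show Finset.univ.filter (fun j => j ≤ i) = Finset.Iic i by ext j; simp]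
      exact Fin.card_Iic i
    · intro j _ hj
      have : lam i ≤ lam j := hlam.antitone hj
      linarith [h₁ j]
    · intro j _ hj
      push_neg at hj
      have hij : (i : ℕ) < (j : ℕ) := hj
      have hk : (j : ℕ) - 1 < N := lt_of_le_of_lt (Nat.sub_le _ _) j.isLt
      set k : Fin N := ⟨(j : ℕ) - 1, hk⟩
      have hkj : (k : ℕ) + 1 = (j : ℕ) := by simp [k]; omega
      have h1 : lhat j ≤ lam k := h₂ k j hkj
      have h2 : lam k ≤ lam i := hlam.antitone (by simp [Fin.le_def, k]; omega)
      linarith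
  have hd : (∏ j ∈ Finset.univ.erase i, (lam i - lam j)) = (-1) ^ (i : ℕ) * B := by
    rw [prod_sign_split' _ _ (fun j => j < i)]
    · congr 2
      rw [show (Finset.univ.erase i).filter (fun j => j < i) = Finset.Iio i by
        ext j
        simp only [mem_filter, mem_erase, mem_Iio, mem_univ, true_and, and_true]
        exact ⟨fun h => h.2, fun h => ⟨Fin.ne_of_lt h, h⟩⟩]
      exact Fin.card_Iio i
    · intro j _ hj
      linarith [hlam hj]
    · intro j hj hj2
      rw [mem_erase] at hj
      have : i < j := lt_of_le_of_ne (not_lt.1 hj2) (Ne.symm hj.1)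
      linarith [hlam this]
  rw [hysq, hc, hd, pow_succ]
  rw [show (-1:ℝ) ^ (i:ℕ) * -1 * A = (-1:ℝ)^(i:ℕ) * (-A) by ring]
  rw [mul_div_mul_left _ _ (pow_ne_zero _ (by norm_num) : ((-1:ℝ))^(i:ℕ) ≠ 0)]
  ring

private lemma lagrange_identity' (N : ℕ) (lam lhat : Fin N → ℝ) (hlam : StrictAnti lam) :
    ∏ i : Fin N, (X - C (lhat i))
      = ∏ i : Fin N, (X - C (lam i))
        + ∑ i : Fin N, C ((∏ j, (lam i - lhat j))
            / (∏ j ∈ Finset.univ.erase i, (lam i - lam j)))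
            * ∏ j ∈ Finset.univ.erase i, (X - C (lam j)) := by
  have hmon : ∀ f : Fin N → ℝ, (∏ i : Fin N, (X - C (f i))).Monic :=
    fun f => monic_prod_of_monic _ _ fun i _ => monic_X_sub_C _
  have hdeg : ∀ f : Fin N → ℝ, (∏ i : Fin N, (X - C (f i))).degree = (N : WithBot ℕ) := by
    intro f
    rw [degree_eq_natDegree (hmon f).ne_zero,
        natDegree_prod _ _ (fun i _ => X_sub_C_ne_zero (f i))]
    simp [natDegree_X_sub_C]
  set p : ℝ[X] := ∏ i : Fin N, (X - C (lam i)) with hp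
  set q : ℝ[X] := (∏ i : Fin N, (X - C (lhat i))) - p with hq
  have hqdeg : q.degree < ((Finset.univ : Finset (Fin N)).card : WithBot ℕ) := by
    rw [Finset.card_univ, Fintype.card_fin]
    calc q.degree < (∏ i : Fin N, (X - C (lhat i))).degree :=
          degree_sub_lt (by rw [hdeg, hdeg]) (hmon lhat).ne_zero
            (by rw [(hmon lhat).leadingCoeff, (hmon lam).leadingCoeff])
      _ = (N : WithBot ℕ) := hdeg lhat
  have hinj : Set.InjOn lam (Finset.univ : Finset (Fin N)) := hlam.injective.injOn
  have key := Lagrange.eq_interpolate hinj hqdeg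
  have heval : ∀ i : Fin N, q.eval (lam i) = ∏ j, (lam i - lhat j) := by
    intro i
    have hp0 : eval (lam i) p = 0 := by
      rw [hp, eval_prod]; exact Finset.prod_eq_zero (Finset.mem_univ i) (by simp)
    rw [hq, eval_sub, hp0, sub_zero, eval_prod]
    simp
  have hbasis : ∀ i : Fin N, Lagrange.basis Finset.univ lam i
      = C ((∏ j ∈ Finset.univ.erase i, (lam i - lam j))⁻¹)
        * ∏ j ∈ Finset.univ.erase i, (X - C (lam j)) := by
    intro i
    rw [Lagrange.basis, ← Finset.prod_inv_distrib, map_prod, ← Finset.prod_mul_distrib]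
    exact Finset.prod_congr rfl fun j _ => rfl
  have : (∏ i : Fin N, (X - C (lhat i))) = p + q := by rw [hq]; ring
  rw [this, key, Lagrange.interpolate_apply]
  congr 1
  refine Finset.sum_congr rfl fun i _ => ?_
  rw [heval, hbasis, div_eq_mul_inv, map_mul, mul_assoc]

private lemma det_diag_add_rank_one' (N : ℕ) (w u : Fin N → ℝ) (hw : ∀ i, w i ≠ 0) :
    (Matrix.diagonal w + Matrix.vecMulVec (-u) u).det
      = (∏ i, w i) * (1 - ∑ i, u i ^ 2 / w i) := by
  have hinv : (Matrix.diagonal w)⁻¹ = Matrix.diagonal (fun i => (w i)⁻¹) := by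
    refine Matrix.inv_eq_right_inv ?_
    rw [Matrix.diagonal_mul_diagonal]
    rw [show (fun i => w i * (w i)⁻¹) = fun _ => (1:ℝ) from
      funext fun i => mul_inv_cancel₀ (hw i)]
    exact Matrix.diagonal_one
  rw [Matrix.vecMulVec_eq Unit, Matrix.det_add_replicateCol_mul_replicateRow
      (by simp [Finset.prod_ne_zero_iff, hw] : IsUnit (Matrix.diagonal w).det)]
  rw [Matrix.det_diagonal, Matrix.det_unique, hinv]
  congr 1
  simp [Matrix.mul_apply, Matrix.diagonal, div_eq_mul_inv]
  rw [← sub_eq_add_neg]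
  exact congrArg (1 - ·) (Finset.sum_congr rfl (fun x _ => by ring))

private lemma eval_charpoly_diag_add' (N : ℕ) (lam y : Fin N → ℝ) (t : ℝ) :
    eval t (Matrix.diagonal lam + Matrix.vecMulVec y y).charpoly
      = (Matrix.diagonal (fun i => t - lam i) + Matrix.vecMulVec (-y) y).det := by
  rw [Matrix.charpoly, show eval t (Matrix.diagonal lam + Matrix.vecMulVec y y).charmatrix.det
      = (evalRingHom t) (Matrix.diagonal lam + Matrix.vecMulVec y y).charmatrix.det from rfl,
    RingHom.map_det]
  congr 1
  ext i j
  by_cases h : i = j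
  · subst h; simp [Matrix.charmatrix_apply_eq, Matrix.diagonal, Matrix.vecMulVec]; ring
  · simp [Matrix.charmatrix_apply_ne _ _ _ h, Matrix.diagonal_apply_ne _ h, Matrix.vecMulVec, h]

/-- Explicit rank-one perturbation realizing a strictly interlacing spectrum:
with `yᵢ = √(∏ⱼ|λᵢ − λ̂ⱼ| / ∏_{j≠i}|λᵢ − λⱼ|)`, the eigenvalues (with
multiplicity) of `diag(λ) + y yᵀ` are exactly the `λ̂ᵢ`. -/
theorem explicit_rank_one_perturbation (N : ℕ) (lam lhat : Fin N → ℝ)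
    (hlam : StrictAnti lam)
    (h₁ : ∀ i : Fin N, lam i ≤ lhat i)
    (h₂ : ∀ i j : Fin N, (i : ℕ) + 1 = (j : ℕ) → lhat j ≤ lam i)
    (y : Fin N → ℝ)
    (hy : ∀ i, y i = Real.sqrt ((∏ j, |lam i - lhat j|)
        / (∏ j ∈ Finset.univ.erase i, |lam i - lam j|))) :
    (Matrix.diagonal lam + Matrix.vecMulVec y y).charpoly
      = ∏ i : Fin N, (X - C (lhat i)) := by
  apply Polynomial.eq_of_infinite_eval_eq
  apply Set.Infinite.mono (s := (Set.range lam)ᶜ)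
  swap
  · exact (Set.finite_range lam).infinite_compl
  intro t ht
  simp only [Set.mem_compl_iff, Set.mem_range, not_exists] at ht
  have hw : ∀ i : Fin N, t - lam i ≠ 0 := fun i => sub_ne_zero.2 fun h => ht i h.symm
  show eval t _ = eval t _
  rw [eval_charpoly_diag_add' N lam y t, det_diag_add_rank_one' N _ y hw,
      lagrange_identity' N lam lhat hlam]
  rw [eval_add, eval_prod, eval_finset_sum]
  simp only [eval_sub, eval_X, eval_C, eval_mul, eval_prod]
  rw [mul_sub, mul_one, Finset.mul_sum, sub_eq_add_neg, ← Finset.sum_neg_distrib]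
  congr 1
  refine Finset.sum_congr rfl fun i _ => ?_
  rw [ysq_eq' N lam lhat hlam h₁ h₂ y hy i,
      ← Finset.mul_prod_erase Finset.univ _ (Finset.mem_univ i)]
  set r := (∏ j, (lam i - lhat j)) / (∏ j ∈ Finset.univ.erase i, (lam i - lam j)) with hr
  set P := ∏ j ∈ Finset.univ.erase i, (t - lam j) with hP
  field_simp [hw i]
end

section
/- Let x₁, …, x_K be strictly positive reals with total x_tot = Σ_k x_k, and suppose N·x_k ≤ x_tot for every k (no oversized user). Then there exists a finite multiset x' of strictly positive reals of size K' with K ≤ K' ≤ K + N − 1, obtained from x by replacing at most N−1 of the x_k each by two positive numbers summing to x_k, such that x' admits a partition into N subsets each of whose elementwise sums equals x_tot/N. -/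
lemma clamp_piece (c s0 s1 : ℝ) (m a0 : ℕ) (hc : 0 < c)
    (h1 : (a0 : ℝ) * c ≤ s0) (h2 : s0 < ((a0 : ℝ) + 1) * c)
    (h3 : s0 < s1) (h4 : s1 ≤ s0 + c)
    (sp : Prop) [Decidable sp]
    (hsp : sp → ((a0 : ℝ) + 1) * c < s1)
    (hnsp : ¬ sp → s1 ≤ ((a0 : ℝ) + 1) * c) :
    (if a0 = m then min s1 (((a0 : ℝ) + 1) * c) - s0 else 0)
      + (if sp then (if a0 + 1 = m then s1 - ((a0 : ℝ) + 1) * c else 0) else 0)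
    = min (max s1 ((m : ℝ) * c)) (((m : ℝ) + 1) * c)
      - min (max s0 ((m : ℝ) * c)) (((m : ℝ) + 1) * c) := by
  rcases Nat.lt_trichotomy a0 m with h | rfl | h
  · rcases eq_or_lt_of_le (Nat.succ_le_of_lt h) with h' | h'
    · -- m = a0 + 1
      subst h'
      simp only [if_neg (show ¬ a0 = a0 + 1 by omega), if_pos rfl, zero_add]
      push_cast
      by_cases hsp' : sp
      · have h5 := hsp hsp'
        rw [if_pos hsp', max_eq_left h5.le, max_eq_right h2.le,
          min_eq_left (by linarith), min_eq_left (by linarith)]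
      · have h5 := hnsp hsp'
        rw [if_neg hsp', max_eq_right h5, max_eq_right h2.le,
          min_eq_left (by linarith)]
        ring
    · -- a0 + 1 < m
      have hm : ((a0 : ℝ) + 2) ≤ m := by exact_mod_cast h'
      have hb : s1 ≤ (m : ℝ) * c := by nlinarith
      have hb0 : s0 ≤ (m : ℝ) * c := by linarith
      rw [if_neg (show ¬ a0 = m by omega), if_neg (show ¬ a0 + 1 = m by omega),
        max_eq_right hb, max_eq_right hb0,
        min_eq_left (show (m:ℝ)*c ≤ ((m:ℝ)+1)*c by linarith)]
      simp
  · -- m = a0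
    rw [if_pos rfl]
    have hn2 : ¬ (a0 + 1 = a0) := by omega
    have hA : (a0 : ℝ) * c ≤ s1 := by linarith
    rw [max_eq_left hA, max_eq_left (by linarith), min_eq_left h2.le]
    by_cases hsp' : sp
    · rw [if_pos hsp', if_neg hn2]; ring
    · rw [if_neg hsp']; ring
  · -- m < a0
    have hm : ((m : ℝ) + 1) ≤ a0 := by exact_mod_cast h
    have hb0 : ((m : ℝ) + 1) * c ≤ s0 := by nlinarith
    rw [if_neg (show ¬ a0 = m by omega), if_neg (show ¬ a0 + 1 = m by omega),
      max_eq_left (by nlinarith), max_eq_left (by nlinarith),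
      min_eq_right hb0, min_eq_right (by linarith)]
    simp

/-- Splitting into a symmetric sum partition: if no user is oversized, the
requirements `x` can be refined into `K'` virtual users (`K ≤ K' ≤ K + N − 1`),
each original user split into at most two virtual users whose requirements sum
to the original, such that the virtual users can be partitioned into `N` groups
each summing to `x_tot / N`. -/
theorem symmetric_sum_partition_exists (N K : ℕ) (hN : 0 < N)
    (x : Fin K → ℝ) (hx : ∀ k, 0 < x k)
    (hno : ∀ k, (N : ℝ) * x k ≤ ∑ j, x j) :
    ∃ (K' : ℕ), K ≤ K' ∧ K' ≤ K + N - 1 ∧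
      ∃ (x' : Fin K' → ℝ) (f : Fin K' → Fin K) (P : Fin K' → Fin N),
        (∀ i, 0 < x' i) ∧
        (∀ k : Fin K, ∑ i ∈ Finset.univ.filter fun i => f i = k, x' i = x k) ∧
        (∀ k : Fin K, (Finset.univ.filter fun i => f i = k).card ≤ 2) ∧
        (∀ n : Fin N, ∑ i ∈ Finset.univ.filter fun i => P i = n, x' i
            = (∑ j, x j) / N) := by
  classical
  rcases Nat.eq_zero_or_pos K with rfl | hKpos
  · exact ⟨0, le_refl _, by omega, Fin.elim0, Fin.elim0, Fin.elim0,
      fun i => i.elim0, fun k => k.elim0, fun k => k.elim0, fun n => by simp⟩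
  haveI : Nonempty (Fin K) := Fin.pos_iff_nonempty.mp hKpos
  set T := ∑ j, x j with hTdef
  have hT0 : 0 < T := Finset.sum_pos (fun i _ => hx i) Finset.univ_nonempty
  have hNR : (0:ℝ) < N := Nat.cast_pos.mpr hN
  set c := T / N with hcdef
  have hc : 0 < c := div_pos hT0 hNR
  have hTc : T = (N : ℝ) * c := by rw [hcdef]; field_simp
  -- prefix sums
  set y : ℕ → ℝ := fun j => if h : j < K then x ⟨j, h⟩ else 0 with hydef
  set s : ℕ → ℝ := fun m => ∑ j ∈ Finset.range m, y j with hsdef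
  have hy0 : ∀ j, 0 ≤ y j := by
    intro j; rw [hydef]; dsimp only; split
    · exact (hx _).le
    · exact le_refl 0
  have hyx : ∀ k : Fin K, y ↑k = x k := by
    intro k; rw [hydef]; simp [k.isLt]
  have hsucc : ∀ m, s (m + 1) = s m + y m := fun m => Finset.sum_range_succ y m
  have hmono : Monotone s := by
    intro i j hij
    exact Finset.sum_le_sum_of_subset_of_nonneg (Finset.range_subset_range.2 hij)
      (fun i _ _ => hy0 i)
  have hs0 : s 0 = 0 := by rw [hsdef]; simp
  have hsK : s K = T := by
    rw [hsdef, hTdef]; dsimp only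
    rw [← Fin.sum_univ_eq_sum_range (fun j => y j) K]
    exact Finset.sum_congr rfl fun k _ => hyx k
  have hsnn : ∀ m, 0 ≤ s m := fun m => Finset.sum_nonneg fun i _ => hy0 i
  have hsleT : ∀ m, m ≤ K → s m ≤ T := fun m hm => hsK ▸ hmono hm
  have hypos : ∀ k, k < K → 0 < y k := by
    intro k hk; rw [hydef]; simpa [hk] using hx ⟨k, hk⟩
  have hyc : ∀ k, k < K → y k ≤ c := by
    intro k hk
    have h1 := hno ⟨k, hk⟩
    rw [hTc] at h1
    have h2 : x ⟨k, hk⟩ ≤ c := (mul_le_mul_iff_right₀ hNR).mp h1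
    have h3 : y k = x ⟨k, hk⟩ := hyx ⟨k, hk⟩
    linarith
  have hslt : ∀ k, k < K → s k < s (k + 1) := by
    intro k hk; rw [hsucc]; linarith [hypos k hk]
  have hstep : ∀ k, k < K → s (k + 1) ≤ s k + c := by
    intro k hk; rw [hsucc]; linarith [hyc k hk]
  -- bin indices
  set a : ℕ → ℕ := fun m => ⌊s m / c⌋₊ with hadef
  have ha_le : ∀ m, (a m : ℝ) * c ≤ s m := by
    intro m
    have h1 : (a m : ℝ) ≤ s m / c := Nat.floor_le (div_nonneg (hsnn m) hc.le)
    calc (a m : ℝ) * c ≤ (s m / c) * c := mul_le_mul_of_nonneg_right h1 hc.le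
      _ = s m := div_mul_cancel₀ _ hc.ne'
  have ha_lt : ∀ m, s m < ((a m : ℝ) + 1) * c := by
    intro m
    have h1 : s m / c < (a m : ℝ) + 1 := Nat.lt_floor_add_one _
    calc s m = (s m / c) * c := (div_mul_cancel₀ _ hc.ne').symm
      _ < ((a m : ℝ) + 1) * c := mul_lt_mul_of_pos_right h1 hc
  have ha_mono : Monotone a := fun i j hij =>
    Nat.floor_mono (div_le_div_of_nonneg_right (hmono hij) hc.le)
  have haN : ∀ k, k < K → a k < N := by
    intro k hk
    rw [hadef]; dsimp only
    rw [Nat.floor_lt (div_nonneg (hsnn k) hc.le), div_lt_iff₀ hc]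
    have : s k < T := lt_of_lt_of_le (hslt k hk) (hsleT (k + 1) hk)
    rw [hTc] at this; linarith
  set sp : ℕ → Prop := fun k => ((a k : ℝ) + 1) * c < s (k + 1) with hspdef
  have hsp_bin : ∀ k, k < K → sp k → a k + 1 < N := by
    intro k hk h
    have h1 : ((a k : ℝ) + 1) * c < T := lt_of_lt_of_le h (hsleT (k + 1) hk)
    rw [hTc] at h1
    have h2 : (a k : ℝ) + 1 < N := (mul_lt_mul_iff_left₀ hc).mp h1
    exact_mod_cast h2
  have hsp_step : ∀ k, sp k → a k + 1 ≤ a (k + 1) := by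
    intro k h
    apply Nat.le_floor
    rw [le_div_iff₀ hc]
    push_cast
    linarith [h]
  -- split set
  set S : Finset (Fin K) := Finset.univ.filter (fun k => sp ↑k) with hSdef
  have cardS : S.card ≤ N - 1 := by
    have key : ∀ i j : Fin K, sp ↑i → sp ↑j → (i : ℕ) < (j : ℕ) → a ↑i < a ↑j := by
      intro i j hi _ hij
      calc a ↑i < a ↑i + 1 := Nat.lt_succ_self _
        _ ≤ a (↑i + 1) := hsp_step ↑i hi
        _ ≤ a ↑j := ha_mono hij
    calc S.card ≤ (Finset.range (N - 1)).card := by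
          refine Finset.card_le_card_of_injOn (fun k : Fin K => a ↑k) ?_ ?_
          · intro k hk
            rw [hSdef] at hk; simp only [Finset.coe_filter, Set.mem_setOf_eq, Finset.mem_coe, Finset.mem_filter, Finset.mem_univ, true_and] at hk
            rw [Finset.mem_coe, Finset.mem_range]
            have := hsp_bin ↑k k.isLt hk
            show a ↑k < N - 1
            omega
          · intro i hi j hj hij
            simp only [hSdef, Finset.coe_filter, Set.mem_setOf_eq, Finset.mem_univ,
              true_and] at hi hj
            by_contra hne
            rcases Nat.lt_trichotomy (i : ℕ) (j : ℕ) with h | h | h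
            · exact absurd hij (Nat.ne_of_lt (key i j hi hj h))
            · exact hne (Fin.ext h)
            · exact absurd hij.symm (Nat.ne_of_lt (key j i hj hi h))
      _ = N - 1 := Finset.card_range _
  -- the index type
  have hcard : Fintype.card (Fin K ⊕ {k : Fin K // sp ↑k}) = K + S.card := by
    rw [Fintype.card_sum, Fintype.card_fin, Fintype.card_subtype]
  set e : (Fin K ⊕ {k : Fin K // sp ↑k}) ≃ Fin (K + S.card) :=
    Fintype.equivFinOfCardEq hcard with hedef
  set p1 : Fin K → ℝ := fun k => min (s (↑k + 1)) (((a ↑k : ℝ) + 1) * c) - s ↑k with hp1def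
  set p2 : Fin K → ℝ := fun k => s (↑k + 1) - ((a ↑k : ℝ) + 1) * c with hp2def
  set x'' : (Fin K ⊕ {k : Fin K // sp ↑k}) → ℝ := Sum.elim p1 (fun k => p2 k.1) with hx''def
  set f'' : (Fin K ⊕ {k : Fin K // sp ↑k}) → Fin K := Sum.elim id (fun k => k.1) with hf''def
  set P'' : (Fin K ⊕ {k : Fin K // sp ↑k}) → Fin N :=
    Sum.elim (fun k => ⟨a ↑k, haN ↑k k.isLt⟩)
      (fun k => ⟨a ↑k.1 + 1, hsp_bin ↑k.1 k.1.isLt k.2⟩) with hP''def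
  have hp1pos : ∀ k : Fin K, 0 < p1 k := by
    intro k
    rw [hp1def]
    have h1 := hslt ↑k k.isLt
    have h2 := ha_lt (↑k : ℕ)
    dsimp only
    rw [sub_pos]
    exact lt_min h1 h2
  have hSmem : ∀ k : Fin K, k ∈ S ↔ sp ↑k := by
    intro k; rw [hSdef]; simp
  have hsp_iff : ∀ k : ℕ, sp k ↔ ((a k : ℝ) + 1) * c < s (k + 1) := fun k => Iff.rfl
  clear_value P'' f'' x'' p2 p1 e S a s y c T
  refine ⟨K + S.card, Nat.le_add_right _ _, by omega, x'' ∘ e.symm, f'' ∘ e.symm,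
    P'' ∘ e.symm, ?_, ?_, ?_, ?_⟩
  · intro i
    rw [Function.comp_apply]
    rcases e.symm i with k | k
    · rw [hx''def]
      dsimp only [Sum.elim_inl]
      exact hp1pos k
    · rw [hx''def]
      dsimp only [Sum.elim_inr]
      rw [hp2def]; dsimp only
      rw [sub_pos]
      exact (hsp_iff ↑k.1).mp k.2
  · -- per-user sums
    intro k
    simp only [Function.comp_apply]
    have h2 : ∑ j ∈ Finset.univ.filter (fun j => f'' j = k), x'' j
        = ∑ i ∈ Finset.univ.filter (fun i => f'' (e.symm i) = k), x'' (e.symm i) :=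
      Finset.sum_equiv e (fun j => by simp) (fun j _ => by simp)
    rw [← h2, Finset.sum_filter, Fintype.sum_sum_type]
    simp only [hf''def, hx''def, Sum.elim_inl, Sum.elim_inr, id_eq]
    rw [Finset.sum_ite_eq' Finset.univ k p1]
    rw [← Finset.sum_subtype S hSmem (fun j => if j = k then p2 j else 0)]
    rw [Finset.sum_ite_eq' S k p2]
    simp only [Finset.mem_univ, if_true]
    have hy' : s (↑k + 1) = s ↑k + x k := by rw [hsucc, hyx]
    by_cases hk : sp ↑k
    · have hk' : ((a ↑k : ℝ) + 1) * c < s (↑k + 1) := (hsp_iff ↑k).mp hk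
      rw [if_pos ((hSmem k).mpr hk), hp1def, hp2def]
      dsimp only
      rw [min_eq_right hk'.le]
      linarith
    · have hk' : ¬ (((a ↑k : ℝ) + 1) * c < s (↑k + 1)) := fun h => hk ((hsp_iff ↑k).mpr h)
      push_neg at hk'
      rw [if_neg (fun h => hk ((hSmem k).mp h)), hp1def]
      dsimp only
      rw [min_eq_left hk']
      linarith
  · -- fiber cards
    intro k
    have h2 : (Finset.univ.filter (fun j => f'' j = k)).card
        = (Finset.univ.filter (fun i => f'' (e.symm i) = k)).card := by
      rw [Finset.card_filter, Finset.card_filter]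
      exact Finset.sum_equiv e (fun j => by simp) (fun j _ => by simp)
    simp only [Function.comp_apply]
    rw [← h2, Finset.card_filter, Fintype.sum_sum_type]
    simp only [hf''def, Sum.elim_inl, Sum.elim_inr, id_eq]
    rw [Finset.sum_ite_eq' Finset.univ k (fun _ => 1)]
    rw [← Finset.sum_subtype S hSmem (fun j => if j = k then 1 else 0)]
    rw [Finset.sum_ite_eq' S k (fun _ => 1)]
    simp only [Finset.mem_univ, if_true]
    split <;> omega
  · -- bin sums
    intro n
    simp only [Function.comp_apply]
    have h2 : ∑ j ∈ Finset.univ.filter (fun j => P'' j = n), x'' j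
        = ∑ i ∈ Finset.univ.filter (fun i => P'' (e.symm i) = n), x'' (e.symm i) :=
      Finset.sum_equiv e (fun j => by simp) (fun j _ => by simp)
    rw [← h2, Finset.sum_filter, Fintype.sum_sum_type]
    simp only [hP''def, hx''def, Sum.elim_inl, Sum.elim_inr]
    have hfin : ∀ (m : ℕ) (h : m < N), ((⟨m, h⟩ : Fin N) = n) = (m = ↑n) := by
      intro m h
      simp [Fin.ext_iff]
    simp only [hfin]
    rw [← Finset.sum_subtype S hSmem (fun j => if a ↑j + 1 = ↑n then p2 j else 0)]
    rw [hSdef, Finset.sum_filter]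
    rw [← Finset.sum_add_distrib]
    have hkey : ∀ j : Fin K,
        ((if a ↑j = ↑n then p1 j else 0) + (if sp ↑j then (if a ↑j + 1 = ↑n then p2 j else 0) else 0))
        = min (max (s (↑j + 1)) ((↑(n : ℕ) : ℝ) * c)) (((↑(n : ℕ) : ℝ) + 1) * c)
          - min (max (s ↑j) ((↑(n : ℕ) : ℝ) * c)) (((↑(n : ℕ) : ℝ) + 1) * c) := by
      intro j
      rw [hp1def, hp2def]
      dsimp only
      exact clamp_piece c (s ↑j) (s (↑j + 1)) ↑n (a ↑j) hc (ha_le ↑j) (ha_lt ↑j)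
        (hslt ↑j j.isLt) (hstep ↑j j.isLt) (sp ↑j)
        (fun h => (hsp_iff ↑j).mp h)
        (fun h => not_lt.mp (fun h' => h ((hsp_iff ↑j).mpr h')))
    rw [Finset.sum_congr rfl (fun j _ => hkey j)]
    rw [Fin.sum_univ_eq_sum_range
      (fun m => min (max (s (m + 1)) ((↑(n : ℕ) : ℝ) * c)) (((↑(n : ℕ) : ℝ) + 1) * c)
        - min (max (s m) ((↑(n : ℕ) : ℝ) * c)) (((↑(n : ℕ) : ℝ) + 1) * c)) K]
    rw [Finset.sum_range_sub
      (fun m => min (max (s m) ((↑(n : ℕ) : ℝ) * c)) (((↑(n : ℕ) : ℝ) + 1) * c)) K]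
    have hn1 : ((n : ℕ) : ℝ) * c < T := by
      have h1 : ((n : ℕ) : ℝ) < N := by exact_mod_cast n.isLt
      calc ((n : ℕ) : ℝ) * c < (N : ℝ) * c := mul_lt_mul_of_pos_right h1 hc
        _ = T := hTc.symm
    have hn2 : (((n : ℕ) : ℝ) + 1) * c ≤ T := by
      have h1 : ((n : ℕ) : ℝ) + 1 ≤ N := by exact_mod_cast n.isLt
      calc (((n : ℕ) : ℝ) + 1) * c ≤ (N : ℝ) * c := mul_le_mul_of_nonneg_right h1 hc.le
        _ = T := hTc.symm
    have hge0 : (0:ℝ) ≤ ((n : ℕ) : ℝ) * c :=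
      mul_nonneg (Nat.cast_nonneg _) hc.le
    rw [hsK, hs0]
    rw [max_eq_left hn1.le, min_eq_right hn2, max_eq_right hge0,
      min_eq_left (by linarith)]
    ring
end

section
/- Fix N ≥ 2 and let K = 2N − 1 users have equal powers p_k = p_tot/K for some p_tot > 0. For any assignment of unit vectors s₁, …, s_K ∈ ℝ^N in which at least two users share the same vector, the matrix A = I_N + N·Σ_k p_k s_k s_kᵀ has largest eigenvalue strictly greater than 1 + p_tot, and consequently det(A) < (1 + p_tot)^N. -/
open Matrix

section Helpers

variable {N Kn : ℕ}

private lemma vecMulVec_mulVec' (u v y : Fin N → ℝ) :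
    vecMulVec u v *ᵥ y = (v ⬝ᵥ y) • u := by
  ext i
  simp only [vecMulVec_apply, mulVec, dotProduct, Pi.smul_apply, smul_eq_mul, Finset.sum_mul]
  exact Finset.sum_congr rfl fun j _ => by ring

private lemma dotProduct_sum' (v : Fin N → ℝ) (w : Fin Kn → Fin N → ℝ) :
    v ⬝ᵥ (∑ j, w j) = ∑ j, v ⬝ᵥ w j := by
  simp only [dotProduct, Finset.sum_apply, Finset.mul_sum]
  exact Finset.sum_comm

private lemma sum_mulVec' (M : Fin Kn → Matrix (Fin N) (Fin N) ℝ) (x : Fin N → ℝ) :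
    (∑ j, M j) *ᵥ x = ∑ j, M j *ᵥ x := by
  ext i
  simp only [mulVec, dotProduct, Matrix.sum_apply, Finset.sum_apply, Finset.sum_mul]
  exact Finset.sum_comm

private lemma quadform (p : ℝ) (s : Fin Kn → Fin N → ℝ) (A : Matrix (Fin N) (Fin N) ℝ)
    (hAdef : A = 1 + (N : ℝ) • ∑ j, p • Matrix.vecMulVec (s j) (s j)) (x : Fin N → ℝ) :
    x ⬝ᵥ A *ᵥ x = x ⬝ᵥ x + N * ∑ j, p * (s j ⬝ᵥ x)^2 := by
  rw [hAdef]
  rw [add_mulVec, smul_mulVec, sum_mulVec', one_mulVec, dotProduct_add, dotProduct_smul]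
  congr 1
  rw [smul_eq_mul, dotProduct_sum']
  congr 1
  refine Finset.sum_congr rfl fun j _ => ?_
  rw [smul_mulVec, vecMulVec_mulVec', dotProduct_smul, dotProduct_smul, smul_eq_mul,
    smul_eq_mul, dotProduct_comm x (s j)]
  ring

private lemma trace_eq_sum_eigenvalues' {n : ℕ} (M : Matrix (Fin n) (Fin n) ℝ)
    (hM : M.IsHermitian) : M.trace = ∑ i, hM.eigenvalues i := by
  conv_lhs => rw [hM.spectral_theorem, Unitary.conjStarAlgAut_apply]
  rw [Matrix.trace_mul_cycle]
  simp [Matrix.mem_unitaryGroup_iff'.mp (hM.eigenvectorUnitary).2, Matrix.trace_diagonal]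

end Helpers

/-- Necessity of `2N − 1` sequences: with `K = 2N − 1` users of equal power
`p_tot/K`, any sequence assignment in which two users share a sequence yields a
signal-plus-interference matrix with largest eigenvalue exceeding `1 + p_tot`,
hence `det A < (1 + p_tot)^N`. -/
theorem shared_sequence_suboptimal (N : ℕ) (hN : 2 ≤ N) (K : ℕ)
    (hK : K = 2 * N - 1) (ptot : ℝ) (hptot : 0 < ptot)
    (s : Fin K → Fin N → ℝ) (hunit : ∀ k, s k ⬝ᵥ s k = 1)
    (k l : Fin K) (hkl : k ≠ l) (hshare : s k = s l)
    (A : Matrix (Fin N) (Fin N) ℝ)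
    (hAdef : A = 1 + (N : ℝ) • ∑ j, (ptot / K) • Matrix.vecMulVec (s j) (s j))
    (hA : A.IsHermitian) :
    (∃ i : Fin N, 1 + ptot < hA.eigenvalues i) ∧ A.det < (1 + ptot) ^ N := by
  classical
  set c : ℝ := 1 + ptot with hc
  have hc0 : 0 < c := by positivity
  have hNR : (2:ℝ) ≤ N := by exact_mod_cast hN
  have hN0 : (0:ℝ) < N := by linarith
  have hNne : (N:ℝ) ≠ 0 := ne_of_gt hN0
  have hKR : (K:ℝ) = 2 * N - 1 := by
    subst hK
    push_cast [Nat.cast_sub (by omega : 1 ≤ 2 * N)]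
    ring
  have hK0 : (0:ℝ) < K := by rw [hKR]; linarith
  have hq := quadform (ptot / K) s A hAdef
  -- Step 1: the Rayleigh quotient at the shared vector exceeds c.
  have hray : c < s k ⬝ᵥ A *ᵥ s k := by
    rw [hq (s k), hunit k]
    have hterm : ∀ j, 0 ≤ (ptot / K) * (s j ⬝ᵥ s k) ^ 2 := fun j => by positivity
    have hpair : ∑ j ∈ ({k, l} : Finset (Fin K)), (ptot / K) * (s j ⬝ᵥ s k) ^ 2
        ≤ ∑ j, (ptot / K) * (s j ⬝ᵥ s k) ^ 2 :=
      Finset.sum_le_sum_of_subset_of_nonneg (Finset.subset_univ _) fun j _ _ => hterm j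
    rw [Finset.sum_pair hkl] at hpair
    have h1 : (ptot / K) * (s k ⬝ᵥ s k) ^ 2 = ptot / K := by rw [hunit k]; ring
    have h2 : (ptot / K) * (s l ⬝ᵥ s k) ^ 2 = ptot / K := by rw [← hshare, hunit k]; ring
    rw [h1, h2] at hpair
    have hkey : ptot < N * (ptot / K + ptot / K) := by
      have he : (N:ℝ) * (ptot / K + ptot / K) = (2 * N * ptot) / K := by field_simp; ring
      rw [he, lt_div_iff₀ hK0, hKR]
      nlinarith
    have hN2 := mul_le_mul_of_nonneg_left hpair (le_of_lt hN0)
    rw [hc]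
    linarith
  -- Step 2: A is positive definite.
  have hApd : A.PosDef := by
    refine posDef_iff_dotProduct_mulVec.mpr ⟨hA, fun x hx => ?_⟩
    rw [star_trivial, hq x]
    have hs0 : 0 ≤ ∑ j, (ptot / K) * (s j ⬝ᵥ x) ^ 2 :=
      Finset.sum_nonneg fun j _ => by positivity
    have hxx : 0 < x ⬝ᵥ x := by
      have h1 : 0 ≤ x ⬝ᵥ x := by
        simp only [dotProduct]
        exact Finset.sum_nonneg fun i _ => mul_self_nonneg _
      rcases h1.lt_or_eq with h | h
      · exact h
      · exact absurd (dotProduct_self_eq_zero.mp h.symm) hx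
    nlinarith
  have heigpos : ∀ i, 0 < hA.eigenvalues i := fun i => hApd.eigenvalues_pos i
  -- Step 3: trace of A.
  have htrA : A.trace = N * c := by
    rw [hAdef, trace_add, trace_smul, trace_one, trace_sum]
    have ht : ∀ j : Fin K, ((ptot / K) • vecMulVec (s j) (s j)).trace = ptot / K := by
      intro j
      rw [trace_smul, smul_eq_mul]
      have hvt : (vecMulVec (s j) (s j)).trace = s j ⬝ᵥ s j := by
        simp [Matrix.trace, Matrix.diag, vecMulVec_apply, dotProduct]
      rw [hvt, hunit j, mul_one]
    rw [Finset.sum_congr rfl fun j _ => ht j, Finset.sum_const, Finset.card_univ,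
      Fintype.card_fin, Fintype.card_fin, nsmul_eq_mul, smul_eq_mul]
    rw [hc]
    field_simp
  have hsum : ∑ i, hA.eigenvalues i = N * c := by
    rw [← trace_eq_sum_eigenvalues' A hA, htrA]
  -- Step 4: existence of an eigenvalue exceeding c.
  have hexists : ∃ i, c < hA.eigenvalues i := by
    by_contra h
    push_neg at h
    set U : Matrix (Fin N) (Fin N) ℝ := (hA.eigenvectorUnitary : Matrix (Fin N) (Fin N) ℝ)
      with hUdef
    have hUU : U * star U = 1 := Matrix.mem_unitaryGroup_iff.mp hA.eigenvectorUnitary.2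
    have hdiag : Matrix.diagonal (fun i => c - hA.eigenvalues i)
        = c • (1 : Matrix (Fin N) (Fin N) ℝ)
          - Matrix.diagonal (RCLike.ofReal ∘ hA.eigenvalues) := by
      ext i j
      by_cases hij : i = j <;>
        simp [Matrix.diagonal_apply, hij, Matrix.one_apply]
    have hcU : U * (c • (1 : Matrix (Fin N) (Fin N) ℝ)) * star U
        = c • (1 : Matrix (Fin N) (Fin N) ℝ) := by
      rw [Matrix.mul_smul, mul_one, Matrix.smul_mul, hUU]
    have hB : c • (1 : Matrix (Fin N) (Fin N) ℝ) - A
        = U * Matrix.diagonal (fun i => c - hA.eigenvalues i) * star U := by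
      conv_lhs => rw [hA.spectral_theorem, Unitary.conjStarAlgAut_apply]
      rw [hdiag, Matrix.mul_sub, Matrix.sub_mul, hcU]
    have hPSD : (c • (1 : Matrix (Fin N) (Fin N) ℝ) - A).PosSemidef := by
      rw [hB]
      exact (Matrix.PosSemidef.diagonal
        (Pi.le_def.mpr fun i => sub_nonneg.mpr (h i))).mul_mul_conjTranspose_same U
    have h0 := hPSD.dotProduct_mulVec_nonneg (s k)
    rw [star_trivial, sub_mulVec, smul_mulVec, one_mulVec, dotProduct_sub,
      dotProduct_smul, hunit k, smul_eq_mul, mul_one] at h0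
    linarith
  refine ⟨hexists, ?_⟩
  -- Step 5: strict AM-GM via Jensen for log.
  obtain ⟨j, hj⟩ := hexists
  have hjlt : ∃ j', hA.eigenvalues j' < c := by
    by_contra h
    push_neg at h
    have hslt : (Finset.univ : Finset (Fin N)).sum (fun _ => c) < ∑ i, hA.eigenvalues i :=
      Finset.sum_lt_sum (fun i _ => h i) ⟨j, Finset.mem_univ j, hj⟩
    rw [Finset.sum_const, Finset.card_univ, Fintype.card_fin, nsmul_eq_mul, hsum] at hslt
    exact lt_irrefl _ hslt
  obtain ⟨j', hj'⟩ := hjlt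
  have hjen := strictConcaveOn_log_Ioi.lt_map_sum (w := fun _ : Fin N => (N:ℝ)⁻¹)
    (t := Finset.univ) (p := hA.eigenvalues)
    (fun i _ => by positivity)
    (by rw [Finset.sum_const, Finset.card_univ, Fintype.card_fin, nsmul_eq_mul]; field_simp)
    (fun i _ => heigpos i)
    ⟨j, Finset.mem_univ j, j', Finset.mem_univ j', by intro hcontra; rw [hcontra] at hj; linarith⟩
  simp only [smul_eq_mul] at hjen
  rw [← Finset.mul_sum, ← Finset.mul_sum, hsum, ← mul_assoc, inv_mul_cancel₀ hNne, one_mul]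
    at hjen
  have hlog : ∑ i, Real.log (hA.eigenvalues i) < N * Real.log c := by
    have hm := mul_lt_mul_of_pos_left hjen hN0
    rw [← mul_assoc, mul_inv_cancel₀ hNne, one_mul] at hm
    exact hm
  have hdet : A.det = ∏ i, hA.eigenvalues i := by
    rw [hA.det_eq_prod_eigenvalues]
    norm_num
  have hprodpos : 0 < ∏ i, hA.eigenvalues i := Finset.prod_pos fun i _ => heigpos i
  have hloglt : Real.log (∏ i, hA.eigenvalues i) < Real.log (c ^ N) := by
    rw [Real.log_prod fun i _ => (heigpos i).ne', Real.log_pow]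
    exact hlog
  rw [hdet]
  exact (Real.log_lt_log_iff hprodpos (pow_pos hc0 N)).mp hloglt
end
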